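/- Let F : ℝ → ℝ, d ∈ ℕ, δ ≥ 0, and keys k_1 < k_2 < ⋯ < k_n. Suppose 0 = g_0 < g_1 < ⋯ < g_t = n is the greedy boundary sequence, meaning that for each i < t, g_{i+1} is the largest index m with g_i < m ≤ n such that E_d({k_{g_i+1}, …, k_m}) ≤ δ. Then for every δ-feasible segmentation 0 = b_0 < b_1 < ⋯ < b_h = n one has t ≤ h; that is, the greedy segmentation uses the minimum possible number of intervals among all δ-feasible segmentations. -/

import Mathlib

/-- Minimax polynomial fitting error of degree `d` for `F` on the key set `S`:
`E_d(S) = inf over (a_0,…,a_d) ∈ ℝ^{d+1} of sup_{k ∈ S} |F k - Σ_j a_j k^j|`. -/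
noncomputable def fitError (F : ℝ → ℝ) (d : ℕ) (S : Set ℝ) : ℝ :=
  ⨅ a : Fin (d + 1) → ℝ,
    sSup ((fun x => |F x - ∑ j : Fin (d + 1), a j * x ^ (j : ℕ)|) '' S)

lemma fitError_mono (F : ℝ → ℝ) (d : ℕ) {S T : Set ℝ} (hT : T.Finite) (hST : S ⊆ T) :
    fitError F d S ≤ fitError F d T := by
  unfold fitError
  have hnn : ∀ (U : Set ℝ) (a : Fin (d + 1) → ℝ),
      0 ≤ sSup ((fun x => |F x - ∑ j : Fin (d + 1), a j * x ^ (j : ℕ)|) '' U) := by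
    intro U a
    apply Real.sSup_nonneg
    rintro y ⟨x, -, rfl⟩
    exact abs_nonneg _
  apply le_ciInf
  intro a
  have h1 : sSup ((fun x => |F x - ∑ j : Fin (d + 1), a j * x ^ (j : ℕ)|) '' S)
      ≤ sSup ((fun x => |F x - ∑ j : Fin (d + 1), a j * x ^ (j : ℕ)|) '' T) := by
    rcases S.eq_empty_or_nonempty with rfl | hS
    · simpa [Real.sSup_empty] using hnn T a
    · exact csSup_le_csSup ((hT.image _).bddAbove) (hS.image _) (Set.image_mono hST)
  refine le_trans (ciInf_le ⟨0, ?_⟩ a) h1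
  rintro y ⟨a', rfl⟩
  exact hnn S a'

/-- The greedy segmentation uses the minimum possible number of
intervals among all δ-feasible segmentations. -/
theorem greedy_min_intervals (F : ℝ → ℝ) (d : ℕ) (δ : ℝ) (hδ : 0 ≤ δ)
    (n : ℕ) (k : ℕ → ℝ)
    (hk : ∀ i j, 1 ≤ i → i < j → j ≤ n → k i < k j)
    -- greedy boundary sequence 0 = g 0 < g 1 < ⋯ < g t = n
    (t : ℕ) (g : ℕ → ℕ) (hg0 : g 0 = 0) (hgt : g t = n)
    (hgreedy : ∀ i < t, g i < g (i + 1) ∧ g (i + 1) ≤ n ∧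
      fitError F d (k '' Set.Icc (g i + 1) (g (i + 1))) ≤ δ ∧
      ∀ m, g i < m → m ≤ n →
        fitError F d (k '' Set.Icc (g i + 1) m) ≤ δ → m ≤ g (i + 1))
    -- arbitrary δ-feasible segmentation 0 = b 0 < b 1 < ⋯ < b h = n
    (h : ℕ) (b : ℕ → ℕ) (hb0 : b 0 = 0) (hbh : b h = n)
    (hbmono : ∀ i < h, b i < b (i + 1))
    (hbn : ∀ i < h, b (i + 1) ≤ n)
    (hbfeas : ∀ i < h, fitError F d (k '' Set.Icc (b i + 1) (b (i + 1))) ≤ δ) :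
    t ≤ h := by
  have gmono : ∀ i j, i < j → j ≤ t → g i < g j := by
    intro i j hij hjt
    induction j with
    | zero => omega
    | succ j ih =>
      have hj : j < t := by omega
      have hstep := (hgreedy j hj).1
      rcases Nat.lt_succ_iff_lt_or_eq.mp hij with h' | rfl
      · exact lt_trans (ih h' (by omega)) hstep
      · exact hstep
  have claim : ∀ i, i ≤ t → i ≤ h → b i ≤ g i := by
    intro i
    induction i with
    | zero => intro _ _; omega
    | succ i ih =>
      intro hit hih
      have hit' : i < t := hit
      have hih' : i < h := hih
      have hbg := ih (le_of_lt hit') (le_of_lt hih')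
      by_cases hc : b (i + 1) ≤ g i
      · exact le_trans hc (le_of_lt (hgreedy i hit').1)
      · push_neg at hc
        have hsub : k '' Set.Icc (g i + 1) (b (i + 1)) ⊆ k '' Set.Icc (b i + 1) (b (i + 1)) :=
          Set.image_mono (Set.Icc_subset_Icc (by omega) le_rfl)
        have hfin : (k '' Set.Icc (b i + 1) (b (i + 1))).Finite :=
          (Set.finite_Icc _ _).image _
        have hfe : fitError F d (k '' Set.Icc (g i + 1) (b (i + 1))) ≤ δ :=
          le_trans (fitError_mono F d hfin hsub) (hbfeas i hih')
        exact (hgreedy i hit').2.2.2 _ hc (hbn i hih') hfe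
  by_contra hth
  push_neg at hth
  have h1 : b h ≤ g h := claim h (le_of_lt hth) le_rfl
  have h2 : g h < g t := gmono h t hth le_rfl
  rw [hbh] at h1
  rw [hgt] at h2
  omega
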